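/- arXiv:2410.07483 — 2 statements merged into one kernel-verified Lean document; each statement's English description precedes it below -/
import Mathlib

section
/- (Robustness of the augmented survival estimator under randomization.) Under randomization, for every z ∈ {1,...,J} and every bounded measurable function p̃ : 𝒳 → ℝ, E[1(Z=z)·(S − p̃(X))/π_z + p̃(X)] = P(S_z = 1). Consequently, if monotonicity also holds, then for every g ∈ {1,...,J} and bounded measurable p̃, p̃′ : 𝒳 → ℝ, E[(1(Z=J−g+1)·(S − p̃(X))/π_{J−g+1} + p̃(X)) − (1(Z=J−g)·(S − p̃′(X))/π_{J−g} + p̃′(X))] = P(G = g), with the convention that the subtracted term is 0 when g = J. -/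
open MeasureTheory ProbabilityTheory

noncomputable section

namespace TruncationByDeath

variable {Ω : Type*} {𝒳 : Type*} [MeasurableSpace Ω] [MeasurableSpace 𝒳]

/-- The σ-algebra on `Ω` generated by the covariate map `X`. -/
def mX (X : Ω → 𝒳) : MeasurableSpace Ω := MeasurableSpace.comap X inferInstance

/-- Real-valued indicator of the event `{Z = z}`. -/
def indic (Z : Ω → ℕ) (z : ℕ) : Ω → ℝ := fun ω => if Z ω = z then 1 else 0

/-- Observed survival status `S := ∑_z 1(Z=z) ⬝ S_z`. -/
def Sobs (J : ℕ) (Z : Ω → ℕ) (S : ℕ → Ω → ℝ) : Ω → ℝ :=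
  fun ω => ∑ z ∈ Finset.Icc 1 J, indic Z z ω * S z ω

/-- Observed outcome `Y := ∑_z 1(Z=z) ⬝ Y_z`. -/
def Yobs (J : ℕ) (Z : Ω → ℕ) (Y : ℕ → Ω → ℝ) : Ω → ℝ :=
  fun ω => ∑ z ∈ Finset.Icc 1 J, indic Z z ω * Y z ω

/-- Principal score `p_z(X) := E[S_z | σ(X)]`, with conventions `p_0 := 0` and `p_{J+1} := 1`. -/
def pscore (P : Measure Ω) (X : Ω → 𝒳) (S : ℕ → Ω → ℝ) (J : ℕ) (z : ℕ) : Ω → ℝ :=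
  if z = 0 then fun _ => 0 else if z = J + 1 then fun _ => 1 else P[S z | mX X]

/-- Treatment probability `π_z := P(Z = z)`. -/
def piZ (P : Measure Ω) (Z : Ω → ℕ) (z : ℕ) : ℝ := (P {ω | Z ω = z}).toReal

/-- Principal stratum variable `G := ∑_{z=1}^J S_z`. -/
def Gsum (J : ℕ) (S : ℕ → Ω → ℝ) : Ω → ℝ := fun ω => ∑ z ∈ Finset.Icc 1 J, S z ω

/-- Real-valued indicator of the event `{G = g}`. -/
def indG (J : ℕ) (S : ℕ → Ω → ℝ) (g : ℕ) : Ω → ℝ :=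
  Set.indicator {ω | Gsum J S ω = (g : ℝ)} (fun _ => (1 : ℝ))

/-- Principal score of the stratum `g` : `e_g(X) := E[1(G=g) | σ(X)]`. -/
def eg (P : Measure Ω) (X : Ω → 𝒳) (J : ℕ) (S : ℕ → Ω → ℝ) (g : ℕ) : Ω → ℝ :=
  P[indG J S g | mX X]

/-- Basic setup: measurability, ranges, values and integrability of the primitives. -/
structure Setup (P : Measure Ω) (J : ℕ) (X : Ω → 𝒳) (Z : Ω → ℕ)
    (S Y : ℕ → Ω → ℝ) : Prop where
  hJ : 2 ≤ J
  hX : Measurable X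
  hZ : Measurable Z
  hZr : ∀ ω, Z ω ∈ Finset.Icc 1 J
  hSm : ∀ z, Measurable (S z)
  hS01 : ∀ z ω, S z ω = 0 ∨ S z ω = 1
  hYm : ∀ z, Measurable (Y z)
  hYint : ∀ z, Integrable (Y z) P

/-- Randomization : `Z` is independent of `(X, S_1,…,S_J, Y_1,…,Y_J)` and `π_z > 0` for all
`z ∈ {1,…,J}`. -/
def Randomization (P : Measure Ω) (J : ℕ) (X : Ω → 𝒳) (Z : Ω → ℕ)
    (S Y : ℕ → Ω → ℝ) : Prop :=
  IndepFun Z (fun ω => (X ω, fun z => S z ω, fun z => Y z ω)) P ∧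
    ∀ z ∈ Finset.Icc 1 J, 0 < piZ P Z z

/-- Monotonicity : `S_{z'} ≤ S_z` a.s. whenever `z' ≤ z`. -/
def Monotonicity (P : Measure Ω) (J : ℕ) (S : ℕ → Ω → ℝ) : Prop :=
  ∀ z ∈ Finset.Icc 1 J, ∀ z' ∈ Finset.Icc 1 J, z' ≤ z → ∀ᵐ ω ∂P, S z' ω ≤ S z ω

/-- Principal ignorability. -/
def PrincipalIgnorability (P : Measure Ω) (J : ℕ) (X : Ω → 𝒳)
    (S Y : ℕ → Ω → ℝ) : Prop :=
  ∀ z ∈ Finset.Icc 1 J, ∀ g ∈ Finset.Icc (J - z + 1) J, ∀ g' ∈ Finset.Icc (J - z + 1) J,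
    (fun ω => (P[fun ω' => Y z ω' * indG J S g ω' | mX X]) ω * eg P X J S g' ω)
      =ᵐ[P] fun ω => (P[fun ω' => Y z ω' * indG J S g' ω' | mX X]) ω * eg P X J S g ω

/-- Positivity : the principal scores are uniformly bounded away from zero. -/
def Positivity (P : Measure Ω) (J : ℕ) (X : Ω → 𝒳) (S : ℕ → Ω → ℝ) : Prop :=
  ∃ c : ℝ, 0 < c ∧ ∀ z ∈ Finset.Icc 1 J, ∀ᵐ ω ∂P, c ≤ pscore P X S J z ω


section Aux

variable {P : Measure Ω} {J : ℕ} {X : Ω → 𝒳} {Z : Ω → ℕ} {S Y : ℕ → Ω → ℝ}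

/-- A bounded measurable function is integrable w.r.t. a finite measure. -/
lemma bdd_integrable [IsFiniteMeasure P] {f : Ω → ℝ} (hm : Measurable f) {C : ℝ}
    (hC : ∀ ω, |f ω| ≤ C) : Integrable f P :=
  ⟨hm.aestronglyMeasurable,
    HasFiniteIntegral.of_bounded (ae_of_all _ fun ω => by simpa [Real.norm_eq_abs] using hC ω)⟩

lemma indic_meas (hZ : Measurable Z) (z : ℕ) : Measurable (indic Z z) :=
  (measurable_from_top (f := fun n : ℕ => if n = z then (1:ℝ) else 0)).comp hZ

lemma indic_abs_le (z : ℕ) (ω : Ω) : |indic Z z ω| ≤ 1 := by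
  unfold indic; split <;> simp

lemma Sobs_meas (hZ : Measurable Z) (hSm : ∀ z, Measurable (S z)) :
    Measurable (Sobs J Z S) :=
  Finset.measurable_sum _ fun z _ => (indic_meas hZ z).mul (hSm z)

lemma S_abs_le (hS01 : ∀ z ω, S z ω = 0 ∨ S z ω = 1) (z : ℕ) (ω : Ω) : |S z ω| ≤ 1 := by
  rcases hS01 z ω with h | h <;> simp [h]

lemma Sobs_abs_le (hS01 : ∀ z ω, S z ω = 0 ∨ S z ω = 1) (ω : Ω) :
    |Sobs J Z S ω| ≤ (J : ℝ) := by
  unfold Sobs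
  calc |∑ z ∈ Finset.Icc 1 J, indic Z z ω * S z ω|
      ≤ ∑ z ∈ Finset.Icc 1 J, |indic Z z ω * S z ω| := Finset.abs_sum_le_sum_abs _ _
    _ ≤ ∑ z ∈ Finset.Icc 1 J, (1:ℝ) := by
        refine Finset.sum_le_sum fun z _ => ?_
        rw [abs_mul]
        calc |indic Z z ω| * |S z ω| ≤ 1 * 1 :=
          mul_le_mul (indic_abs_le z ω) (S_abs_le hS01 z ω) (abs_nonneg _) zero_le_one
        _ = 1 := mul_one 1
    _ = (J : ℝ) := by rw [Finset.sum_const, Nat.card_Icc, nsmul_eq_mul, mul_one]; norm_num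

lemma indic_mul_Sobs (z : ℕ) (hz : z ∈ Finset.Icc 1 J) (ω : Ω) :
    indic Z z ω * Sobs J Z S ω = indic Z z ω * S z ω := by
  by_cases h : Z ω = z
  · have h1 : indic Z z ω = 1 := if_pos h
    rw [h1, one_mul, one_mul]
    unfold Sobs
    rw [Finset.sum_eq_single z (fun b _ hb => by simp [indic, h, Ne.symm hb])
      (fun hzz => absurd hz hzz)]
    simp [indic, h]
  · simp [indic, h]

lemma integral_indic (hZ : Measurable Z) (z : ℕ) :
    ∫ ω, indic Z z ω ∂P = piZ P Z z := by
  have hms : MeasurableSet {ω | Z ω = z} := hZ (measurableSet_singleton z)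
  have : indic Z z = Set.indicator {ω | Z ω = z} (fun _ => (1:ℝ)) := by
    funext ω; by_cases h : Z ω = z <;> simp [indic, h]
  rw [this, integral_indicator_const _ hms, smul_eq_mul, mul_one, piZ]
  rfl

lemma integral_S_eq [IsProbabilityMeasure P] (hSm : ∀ z, Measurable (S z))
    (hS01 : ∀ z ω, S z ω = 0 ∨ S z ω = 1) (z : ℕ) :
    ∫ ω, S z ω ∂P = (P {ω | S z ω = 1}).toReal := by
  have hms : MeasurableSet {ω | S z ω = 1} := hSm z (measurableSet_singleton 1)
  have : (fun ω => S z ω) = Set.indicator {ω | S z ω = 1} (fun _ => (1:ℝ)) := by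
    funext ω
    rcases hS01 z ω with h | h
    · simp [Set.indicator, h]
    · simp [Set.indicator, h]
  rw [this, integral_indicator_const _ hms, smul_eq_mul, mul_one]
  rfl

lemma integrable_aug [IsProbabilityMeasure P] (hset : Setup P J X Z S Y)
    (z : ℕ) (pt : 𝒳 → ℝ) (hpt : Measurable pt) (hptb : ∃ C, ∀ x, |pt x| ≤ C) :
    Integrable (fun ω => indic Z z ω * (Sobs J Z S ω - pt (X ω)) / piZ P Z z + pt (X ω)) P := by
  obtain ⟨C, hC⟩ := hptb
  have hC' : ∀ x, |pt x| ≤ |C| := fun x => (hC x).trans (le_abs_self C)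
  refine bdd_integrable (C := ((J : ℝ) + |C|) * |piZ P Z z|⁻¹ + |C|) ?_ ?_
  · exact ((((indic_meas hset.hZ z).mul
      ((Sobs_meas hset.hZ hset.hSm).sub (hpt.comp hset.hX))).div_const _).add
      (hpt.comp hset.hX))
  · intro ω
    calc |indic Z z ω * (Sobs J Z S ω - pt (X ω)) / piZ P Z z + pt (X ω)|
        ≤ |indic Z z ω * (Sobs J Z S ω - pt (X ω)) / piZ P Z z| + |pt (X ω)| := abs_add_le _ _
      _ ≤ ((J : ℝ) + |C|) * |piZ P Z z|⁻¹ + |C| := by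
          refine add_le_add ?_ (hC' _)
          rw [div_eq_mul_inv, abs_mul, abs_inv]
          refine mul_le_mul_of_nonneg_right ?_ (inv_nonneg.mpr (abs_nonneg _))
          rw [abs_mul]
          calc |indic Z z ω| * |Sobs J Z S ω - pt (X ω)| ≤ 1 * ((J : ℝ) + |C|) := by
                refine mul_le_mul (indic_abs_le z ω) ?_ (abs_nonneg _) zero_le_one
                calc |Sobs J Z S ω - pt (X ω)| ≤ |Sobs J Z S ω| + |pt (X ω)| := abs_sub _ _
                  _ ≤ (J : ℝ) + |C| := add_le_add (Sobs_abs_le hset.hS01 ω) (hC' _)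
            _ = (J : ℝ) + |C| := one_mul _

/-- Key lemma: the augmented estimator identifies `P(S_z = 1)` under randomization. -/
lemma aug_eq [IsProbabilityMeasure P] (hset : Setup P J X Z S Y)
    (hrand : Randomization P J X Z S Y) (z : ℕ) (hz : z ∈ Finset.Icc 1 J)
    (pt : 𝒳 → ℝ) (hpt : Measurable pt) (hptb : ∃ C, ∀ x, |pt x| ≤ C) :
    ∫ ω, (indic Z z ω * (Sobs J Z S ω - pt (X ω)) / piZ P Z z + pt (X ω)) ∂P
      = (P {ω | S z ω = 1}).toReal := by
  obtain ⟨C, hC⟩ := hptb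
  have hC' : ∀ x, |pt x| ≤ |C| := fun x => (hC x).trans (le_abs_self C)
  have hπ : 0 < piZ P Z z := hrand.2 z hz
  -- replace Sobs by S z inside the product
  have heq : (fun ω => indic Z z ω * (Sobs J Z S ω - pt (X ω)) / piZ P Z z + pt (X ω))
      = fun ω => indic Z z ω * (S z ω - pt (X ω)) / piZ P Z z + pt (X ω) := by
    funext ω
    rw [mul_sub, mul_sub, indic_mul_Sobs z hz]
  -- independence
  have hind : IndepFun (indic Z z) (fun ω => S z ω - pt (X ω)) P := by
    have h1 : Measurable (fun n : ℕ => if n = z then (1:ℝ) else 0) := measurable_from_top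
    have h2 : Measurable (fun p : 𝒳 × (ℕ → ℝ) × (ℕ → ℝ) => p.2.1 z - pt p.1) :=
      ((measurable_pi_apply z).comp (measurable_fst.comp measurable_snd)).sub
        (hpt.comp measurable_fst)
    exact hrand.1.comp h1 h2
  have hfint : Integrable (indic Z z) P :=
    bdd_integrable (indic_meas hset.hZ z) (indic_abs_le z)
  have hgm : Measurable (fun ω => S z ω - pt (X ω)) := (hset.hSm z).sub (hpt.comp hset.hX)
  have hgb : ∀ ω, |S z ω - pt (X ω)| ≤ 1 + |C| := fun ω =>
    (abs_sub _ _).trans (add_le_add (S_abs_le hset.hS01 z ω) (hC' _))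
  have hgint : Integrable (fun ω => S z ω - pt (X ω)) P := bdd_integrable hgm hgb
  have hmul : ∫ ω, indic Z z ω * (S z ω - pt (X ω)) ∂P
      = (∫ ω, indic Z z ω ∂P) * ∫ ω, (S z ω - pt (X ω)) ∂P :=
    hind.integral_fun_mul_eq_mul_integral hfint.aestronglyMeasurable hgint.aestronglyMeasurable
  have hfg_int : Integrable (fun ω => indic Z z ω * (S z ω - pt (X ω))) P := by
    refine bdd_integrable ((indic_meas hset.hZ z).mul hgm) (C := 1 + |C|) fun ω => ?_
    rw [abs_mul]
    calc |indic Z z ω| * |S z ω - pt (X ω)| ≤ 1 * (1 + |C|) :=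
        mul_le_mul (indic_abs_le z ω) (hgb ω) (abs_nonneg _) zero_le_one
      _ = 1 + |C| := one_mul _
  have hSz_int : Integrable (S z) P := bdd_integrable (hset.hSm z) (S_abs_le hset.hS01 z)
  have hptX_int : Integrable (fun ω => pt (X ω)) P :=
    bdd_integrable (hpt.comp hset.hX) (fun ω => hC' (X ω))
  rw [heq]
  rw [integral_add (hfg_int.div_const _) hptX_int, integral_div, hmul,
    integral_indic hset.hZ, integral_sub hSz_int hptX_int]
  rw [mul_comm, mul_div_assoc, div_self (ne_of_gt hπ), mul_one, sub_add_cancel]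
  exact integral_S_eq hset.hSm hset.hS01 z

/-- Pointwise combinatorial fact about monotone `{0,1}` chains. -/
lemma chain_indicator (J : ℕ) (s : ℕ → ℝ) (h01 : ∀ z, s z = 0 ∨ s z = 1)
    (hmono : ∀ z ∈ Finset.Icc 1 J, ∀ z' ∈ Finset.Icc 1 J, z' ≤ z → s z' ≤ s z)
    (g : ℕ) (hg : g ∈ Finset.Icc 1 J) :
    (if (∑ z ∈ Finset.Icc 1 J, s z) = (g : ℝ) then (1:ℝ) else 0)
      = s (J - g + 1) - (if J - g = 0 then 0 else s (J - g)) := by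
  have hg' := Finset.mem_Icc.mp hg
  have hs0 : ∀ z, 0 ≤ s z := fun z => by rcases h01 z with h | h <;> simp [h]
  have hs1 : ∀ z, s z ≤ 1 := fun z => by rcases h01 z with h | h <;> simp [h]
  have claimA : ∀ m, 1 ≤ m → m ≤ J → s m = 1 →
      ((J - m + 1 : ℕ) : ℝ) ≤ ∑ z ∈ Finset.Icc 1 J, s z := by
    intro m h1 h2 hsm
    have hsub : Finset.Icc m J ⊆ Finset.Icc 1 J := Finset.Icc_subset_Icc h1 le_rfl
    have h1' : ∀ z ∈ Finset.Icc m J, (1:ℝ) ≤ s z := by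
      intro z hzz
      have hzz' := Finset.mem_Icc.mp hzz
      have := hmono z (Finset.mem_Icc.mpr ⟨le_trans h1 hzz'.1, hzz'.2⟩) m
        (Finset.mem_Icc.mpr ⟨h1, h2⟩) hzz'.1
      linarith
    calc ((J - m + 1 : ℕ) : ℝ) = ∑ _z ∈ Finset.Icc m J, (1:ℝ) := by
          rw [Finset.sum_const, Nat.card_Icc, nsmul_eq_mul, mul_one]
          congr 1; omega
      _ ≤ ∑ z ∈ Finset.Icc m J, s z := Finset.sum_le_sum h1'
      _ ≤ ∑ z ∈ Finset.Icc 1 J, s z :=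
          Finset.sum_le_sum_of_subset_of_nonneg hsub (fun z _ _ => hs0 z)
  have claimB : ∀ m, 1 ≤ m → m ≤ J → s m = 0 →
      ∑ z ∈ Finset.Icc 1 J, s z ≤ ((J - m : ℕ) : ℝ) := by
    intro m h1 h2 hsm
    have hb : ∀ z ∈ Finset.Icc 1 J, s z ≤ (if z ≤ m then (0:ℝ) else 1) := by
      intro z hzz
      by_cases hzm : z ≤ m
      · simp only [if_pos hzm]
        have := hmono m (Finset.mem_Icc.mpr ⟨h1, h2⟩) z hzz hzm
        rw [hsm] at this; exact this
      · simp only [if_neg hzm]; exact hs1 z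
    have hsplit : (Finset.Icc 1 J).filter (fun z => ¬ z ≤ m) = Finset.Icc (m+1) J := by
      ext x; simp only [Finset.mem_filter, Finset.mem_Icc]; omega
    calc ∑ z ∈ Finset.Icc 1 J, s z ≤ ∑ z ∈ Finset.Icc 1 J, (if z ≤ m then (0:ℝ) else 1) :=
          Finset.sum_le_sum hb
      _ = ∑ z ∈ Finset.Icc 1 J, (if ¬ z ≤ m then (1:ℝ) else 0) :=
          Finset.sum_congr rfl fun z _ => by by_cases h : z ≤ m <;> simp [h]
      _ = ∑ _z ∈ (Finset.Icc 1 J).filter (fun z => ¬ z ≤ m), (1:ℝ) :=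
          (Finset.sum_filter _ _).symm
      _ = ((J - m : ℕ) : ℝ) := by
          rw [hsplit, Finset.sum_const, Nat.card_Icc, nsmul_eq_mul, mul_one]
          congr 1; omega
  have hm1a : 1 ≤ J - g + 1 := by omega
  have hm1b : J - g + 1 ≤ J := by omega
  rcases h01 (J - g + 1) with hA | hA
  · have hT : ∑ z ∈ Finset.Icc 1 J, s z ≤ ((J - (J - g + 1) : ℕ) : ℝ) :=
      claimB _ hm1a hm1b hA
    have hlt : (J - (J - g + 1) : ℕ) < g := by omega
    have hT' : ∑ z ∈ Finset.Icc 1 J, s z < (g : ℝ) :=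
      lt_of_le_of_lt hT (by exact_mod_cast hlt)
    rw [if_neg (ne_of_lt hT'), hA]
    by_cases h0 : J - g = 0
    · simp [h0]
    · rw [if_neg h0]
      have h0' : 1 ≤ J - g := Nat.one_le_iff_ne_zero.mpr h0
      have hle : s (J - g) ≤ s (J - g + 1) :=
        hmono (J - g + 1) (Finset.mem_Icc.mpr ⟨hm1a, hm1b⟩) (J - g)
          (Finset.mem_Icc.mpr ⟨h0', by omega⟩) (by omega)
      rw [hA] at hle
      have := hs0 (J - g)
      linarith
  · by_cases h0 : J - g = 0
    · have hTge : ((J - (J - g + 1) + 1 : ℕ) : ℝ) ≤ ∑ z ∈ Finset.Icc 1 J, s z :=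
        claimA _ hm1a hm1b hA
      have hTle : ∑ z ∈ Finset.Icc 1 J, s z ≤ (J : ℝ) := by
        calc ∑ z ∈ Finset.Icc 1 J, s z ≤ ∑ _z ∈ Finset.Icc 1 J, (1:ℝ) :=
            Finset.sum_le_sum fun z _ => hs1 z
          _ = (J : ℝ) := by
            rw [Finset.sum_const, Nat.card_Icc, nsmul_eq_mul, mul_one]; norm_num
      have hcast : ((J - (J - g + 1) + 1 : ℕ) : ℝ) = (g : ℝ) := by
        have h : (J - (J - g + 1) + 1 : ℕ) = g := by omega
        rw [h]
      have hgJ : (g : ℝ) = (J : ℝ) := by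
        have h : g = J := by omega
        rw [h]
      have hT : ∑ z ∈ Finset.Icc 1 J, s z = (g : ℝ) := by
        refine le_antisymm ?_ ?_
        · rw [hgJ]; exact hTle
        · rw [← hcast]; exact hTge
      rw [if_pos hT, if_pos h0, hA]; ring
    · have h0' : 1 ≤ J - g := Nat.one_le_iff_ne_zero.mpr h0
      rcases h01 (J - g) with hB | hB
      · have hTge : ((J - (J - g + 1) + 1 : ℕ) : ℝ) ≤ ∑ z ∈ Finset.Icc 1 J, s z :=
          claimA _ hm1a hm1b hA
        have hTle : ∑ z ∈ Finset.Icc 1 J, s z ≤ ((J - (J - g) : ℕ) : ℝ) :=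
          claimB _ h0' (by omega) hB
        have hc1 : (J - (J - g + 1) + 1 : ℕ) = g := by omega
        have hc2 : (J - (J - g) : ℕ) = g := by omega
        have hT : ∑ z ∈ Finset.Icc 1 J, s z = (g : ℝ) := by
          refine le_antisymm ?_ ?_
          · calc ∑ z ∈ Finset.Icc 1 J, s z ≤ ((J - (J - g) : ℕ) : ℝ) := hTle
              _ = (g : ℝ) := by rw [hc2]
          · calc (g : ℝ) = ((J - (J - g + 1) + 1 : ℕ) : ℝ) := by rw [hc1]
              _ ≤ _ := hTge
        rw [if_pos hT, if_neg h0, hA, hB]; ring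
      · have hTge : ((J - (J - g) + 1 : ℕ) : ℝ) ≤ ∑ z ∈ Finset.Icc 1 J, s z :=
          claimA _ h0' (by omega) hB
        have hlt : g < J - (J - g) + 1 := by omega
        have hgt : (g : ℝ) < ∑ z ∈ Finset.Icc 1 J, s z :=
          lt_of_lt_of_le (by exact_mod_cast hlt) hTge
        rw [if_neg (ne_of_gt hgt), if_neg h0, hA, hB]; ring

/-- Under monotonicity, a.e. `1(G = g) = S_{J-g+1} - S_{J-g}` (second term `0` if `g = J`). -/
lemma indG_ae_eq [IsProbabilityMeasure P] (hset : Setup P J X Z S Y)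
    (hmono : Monotonicity P J S) (g : ℕ) (hg : g ∈ Finset.Icc 1 J) :
    (indG J S g : Ω → ℝ)
      =ᵐ[P] fun ω => S (J - g + 1) ω - (if J - g = 0 then 0 else S (J - g) ω) := by
  have hall : ∀ᵐ ω ∂P, ∀ z, ∀ z', z ∈ Finset.Icc 1 J → z' ∈ Finset.Icc 1 J → z' ≤ z →
      S z' ω ≤ S z ω := by
    rw [ae_all_iff]
    intro z
    rw [ae_all_iff]
    intro z'
    by_cases hz : z ∈ Finset.Icc 1 J ∧ z' ∈ Finset.Icc 1 J ∧ z' ≤ z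
    · filter_upwards [hmono z hz.1 z' hz.2.1 hz.2.2] with ω h _ _ _
      exact h
    · filter_upwards with ω h1 h2 h3
      exact absurd ⟨h1, h2, h3⟩ hz
  filter_upwards [hall] with ω hω
  have : indG J S g ω = if (∑ z ∈ Finset.Icc 1 J, S z ω) = (g : ℝ) then (1:ℝ) else 0 := by
    simp [indG, Set.indicator_apply, Gsum]
  rw [this]
  exact chain_indicator J (fun z => S z ω) (fun z => hset.hS01 z ω)
    (fun z hz z' hz' hle => hω z z' hz hz' hle) g hg

/-- `P(G = g)` equals the telescoping difference of survival probabilities. -/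
lemma PG_eq [IsProbabilityMeasure P] (hset : Setup P J X Z S Y)
    (hmono : Monotonicity P J S) (g : ℕ) (hg : g ∈ Finset.Icc 1 J) :
    (P {ω | Gsum J S ω = (g : ℝ)}).toReal
      = (P {ω | S (J - g + 1) ω = 1}).toReal
        - (if J - g = 0 then 0 else (P {ω | S (J - g) ω = 1}).toReal) := by
  have hGm : Measurable (Gsum J S) := Finset.measurable_sum _ fun z _ => hset.hSm z
  have hms : MeasurableSet {ω | Gsum J S ω = (g : ℝ)} := hGm (measurableSet_singleton _)
  have h1 : (P {ω | Gsum J S ω = (g : ℝ)}).toReal = ∫ ω, indG J S g ω ∂P := by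
    rw [show (indG J S g : Ω → ℝ)
        = Set.indicator {ω | Gsum J S ω = (g : ℝ)} (fun _ => (1:ℝ)) from rfl,
      integral_indicator_const _ hms, smul_eq_mul, mul_one]
    rfl
  rw [h1, integral_congr_ae (indG_ae_eq hset hmono g hg)]
  have hint1 : Integrable (S (J - g + 1)) P :=
    bdd_integrable (hset.hSm _) (S_abs_le hset.hS01 _)
  by_cases h0 : J - g = 0
  · simp only [if_pos h0, sub_zero]
    exact integral_S_eq hset.hSm hset.hS01 _
  · simp only [if_neg h0]
    have hint2 : Integrable (S (J - g)) P :=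
      bdd_integrable (hset.hSm _) (S_abs_le hset.hS01 _)
    rw [integral_sub hint1 hint2, integral_S_eq hset.hSm hset.hS01,
      integral_S_eq hset.hSm hset.hS01]

end Aux

/-- **robustness of the augmented survival estimator under randomization.**
For every `z ∈ {1,…,J}` and bounded measurable `p̃`,
`E[1(Z=z)(S − p̃(X))/π_z + p̃(X)] = P(S_z = 1)`; if monotonicity also holds, then the
difference of two such augmented terms at levels `J−g+1` and `J−g` has expectation
`P(G=g)`, with the convention that the subtracted term is `0` when `g = J`. -/
theorem statement11 (P : Measure Ω) [IsProbabilityMeasure P] (J : ℕ)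
    (X : Ω → 𝒳) (Z : Ω → ℕ) (S Y : ℕ → Ω → ℝ)
    (hset : Setup P J X Z S Y)
    (hrand : Randomization P J X Z S Y) :
    (∀ z ∈ Finset.Icc 1 J, ∀ pt : 𝒳 → ℝ, Measurable pt → (∃ C, ∀ x, |pt x| ≤ C) →
      ∫ ω, (indic Z z ω * (Sobs J Z S ω - pt (X ω)) / piZ P Z z + pt (X ω)) ∂P
        = (P {ω | S z ω = 1}).toReal) ∧
    (Monotonicity P J S →
      ∀ g ∈ Finset.Icc 1 J, ∀ pt pt' : 𝒳 → ℝ,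
        Measurable pt → (∃ C, ∀ x, |pt x| ≤ C) →
        Measurable pt' → (∃ C, ∀ x, |pt' x| ≤ C) →
        ∫ ω,
          ((indic Z (J - g + 1) ω * (Sobs J Z S ω - pt (X ω)) / piZ P Z (J - g + 1)
              + pt (X ω))
            - (if J - g = 0 then 0
              else indic Z (J - g) ω * (Sobs J Z S ω - pt' (X ω)) / piZ P Z (J - g)
                + pt' (X ω))) ∂P
          = (P {ω | Gsum J S ω = (g : ℝ)}).toReal) := by
  constructor
  · intro z hz pt hpt hptb
    exact aug_eq hset hrand z hz pt hpt hptb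
  · intro hmono g hg pt pt' hpt hptb hpt' hptb'
    have hg' := Finset.mem_Icc.mp hg
    have hz1 : J - g + 1 ∈ Finset.Icc 1 J := Finset.mem_Icc.mpr ⟨by omega, by omega⟩
    have hint1 : Integrable
        (fun ω => indic Z (J - g + 1) ω * (Sobs J Z S ω - pt (X ω)) / piZ P Z (J - g + 1)
          + pt (X ω)) P := integrable_aug hset _ pt hpt hptb
    have heq1 : ∫ ω, (indic Z (J - g + 1) ω * (Sobs J Z S ω - pt (X ω)) / piZ P Z (J - g + 1)
          + pt (X ω)) ∂P = (P {ω | S (J - g + 1) ω = 1}).toReal :=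
      aug_eq hset hrand _ hz1 pt hpt hptb
    by_cases h0 : J - g = 0
    · simp only [if_pos h0, sub_zero]
      rw [heq1, PG_eq hset hmono g hg, if_pos h0, sub_zero]
    · have hz0 : J - g ∈ Finset.Icc 1 J := Finset.mem_Icc.mpr ⟨by omega, by omega⟩
      have hint2 : Integrable
          (fun ω => indic Z (J - g) ω * (Sobs J Z S ω - pt' (X ω)) / piZ P Z (J - g)
            + pt' (X ω)) P := integrable_aug hset _ pt' hpt' hptb'
      simp only [if_neg h0]
      rw [integral_sub hint1 hint2, heq1,
        aug_eq hset hrand _ hz0 pt' hpt' hptb', PG_eq hset hmono g hg, if_neg h0]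


end TruncationByDeath
end
end

section
/- (Double robustness of the augmented survival estimator under treatment ignorability.) Fix z ∈ {1,...,J} and let π̃_z, p̃_z : 𝒳 → [c, 1−c] be measurable working functions with c ∈ (0, 1/2). If either π̃_z(X) = π_z(X) P-a.s. or p̃_z(X) = p_z(X) P-a.s., then E[1(Z=z)·(S − p̃_z(X))/π̃_z(X) + p̃_z(X)] = P(S_z = 1). -/
open MeasureTheory ProbabilityTheory

noncomputable section

namespace TruncationByDeath

variable {Ω : Type*} {𝒳 : Type*} [MeasurableSpace Ω] [MeasurableSpace 𝒳]

/-- Basic setup with bounded potential outcomes (observational setting). -/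
structure SetupB (P : Measure Ω) (J : ℕ) (X : Ω → 𝒳) (Z : Ω → ℕ)
    (S Y : ℕ → Ω → ℝ) : Prop where
  hJ : 2 ≤ J
  hX : Measurable X
  hZ : Measurable Z
  hZr : ∀ ω, Z ω ∈ Finset.Icc 1 J
  hSm : ∀ z, Measurable (S z)
  hS01 : ∀ z ω, S z ω = 0 ∨ S z ω = 1
  hYm : ∀ z, Measurable (Y z)
  hYbd : ∃ C, ∀ z ω, |Y z ω| ≤ C

/-- Generalized propensity score `π_z(X) := E[1(Z=z) | σ(X)]`. -/
def piX (P : Measure Ω) (X : Ω → 𝒳) (Z : Ω → ℕ) (z : ℕ) : Ω → ℝ :=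
  P[indic Z z | mX X]

/-- Treatment ignorability in the observational setting: the generalized propensity scores
are bounded away from zero, and conditionally on `σ(X)` the treatment indicator factorizes
from any bounded measurable functional of the potential values. -/
def TreatmentIgnorability (P : Measure Ω) (J : ℕ) (X : Ω → 𝒳) (Z : Ω → ℕ)
    (S Y : ℕ → Ω → ℝ) : Prop :=
  (∃ c : ℝ, 0 < c ∧ ∀ z ∈ Finset.Icc 1 J, ∀ᵐ ω ∂P, c ≤ piX P X Z z ω) ∧
  ∀ z ∈ Finset.Icc 1 J, ∀ φ : (ℕ → ℝ) → (ℕ → ℝ) → ℝ,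
    Measurable (Function.uncurry φ) → (∃ C, ∀ s y, |φ s y| ≤ C) →
    P[fun ω => indic Z z ω * φ (fun w => S w ω) (fun w => Y w ω) | mX X]
      =ᵐ[P] fun ω => piX P X Z z ω
        * (P[fun ω' => φ (fun w => S w ω') (fun w => Y w ω') | mX X]) ω

/-- Bounded a.e.-strongly-measurable functions are integrable on a probability space. -/
lemma integrable_of_bdd {P : Measure Ω} [IsProbabilityMeasure P] {f : Ω → ℝ}
    (hf : AEStronglyMeasurable f P) {C : ℝ} (h : ∀ᵐ ω ∂P, |f ω| ≤ C) : Integrable f P :=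
  Integrable.mono' (integrable_const C) hf (h.mono fun ω hω => by simpa using hω)

/-- Tower + pull-out: integrating against a bounded function of `X` may be replaced by
integrating against the conditional expectation given `σ(X)`. -/
lemma pull_out (P : Measure Ω) [IsProbabilityMeasure P] (X : Ω → 𝒳) (hX : Measurable X)
    (ψ : 𝒳 → ℝ) (hψ : Measurable ψ) (C : ℝ) (hbd : ∀ x, |ψ x| ≤ C)
    (g : Ω → ℝ) (hg : Integrable g P) :
    ∫ ω, ψ (X ω) * g ω ∂P = ∫ ω, ψ (X ω) * (P[g | mX X]) ω ∂P := by
  have hm : mX X ≤ ‹MeasurableSpace Ω› := hX.comap_le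
  have hsm : StronglyMeasurable[mX X] (fun ω => ψ (X ω)) :=
    (hψ.comp (comap_measurable X)).stronglyMeasurable
  have hfg : Integrable (fun ω => ψ (X ω) * g ω) P :=
    hg.bdd_mul (c := C) (hψ.comp hX).aestronglyMeasurable (ae_of_all _ fun ω => by simpa using hbd (X ω))
  have h1 := integral_condExp (μ := P) (f := fun ω => ψ (X ω) * g ω) hm
  rw [← h1]
  exact integral_congr_ae (condExp_mul_of_stronglyMeasurable_left hsm hfg hg)

/-- **double robustness of the augmented survival estimator under treatment
ignorability.** If either the working propensity score or the working principal score is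
correct, the augmented estimator recovers `P(S_z = 1)`. -/
theorem statement12 (P : Measure Ω) [IsProbabilityMeasure P] (J : ℕ)
    (X : Ω → 𝒳) (Z : Ω → ℕ) (S Y : ℕ → Ω → ℝ)
    (hset : SetupB P J X Z S Y)
    (hTI : TreatmentIgnorability P J X Z S Y)
    (z : ℕ) (hz : z ∈ Finset.Icc 1 J)
    (cw : ℝ) (hcw : 0 < cw ∧ cw < 1 / 2)
    (πt pt : 𝒳 → ℝ)
    (hπtm : Measurable πt) (hπtb : ∀ x, πt x ∈ Set.Icc cw (1 - cw))
    (hptm : Measurable pt) (hptb : ∀ x, pt x ∈ Set.Icc cw (1 - cw))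
    (hdr : ((fun ω => πt (X ω)) =ᵐ[P] piX P X Z z)
      ∨ ((fun ω => pt (X ω)) =ᵐ[P] pscore P X S J z)) :
    ∫ ω, (indic Z z ω * (Sobs J Z S ω - pt (X ω)) / πt (X ω) + pt (X ω)) ∂P
      = (P {ω | S z ω = 1}).toReal := by
  obtain ⟨hz1, hzJ⟩ := Finset.mem_Icc.mp hz
  have hm : mX X ≤ ‹MeasurableSpace Ω› := hset.hX.comap_le
  have hπpos : ∀ x, (0:ℝ) < πt x := fun x => lt_of_lt_of_le hcw.1 (hπtb x).1
  have hπne : ∀ x, πt x ≠ 0 := fun x => (hπpos x).ne'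
  set pz : Ω → ℝ := P[S z | mX X] with hpz
  set πx : Ω → ℝ := piX P X Z z with hπx
  -- measurability of the indicator
  have hZset : MeasurableSet {ω | Z ω = z} := hset.hZ (measurableSet_singleton z)
  have hindm : Measurable (indic Z z) := by
    unfold indic
    exact Measurable.ite hZset measurable_const measurable_const
  have hindb : ∀ ω, |indic Z z ω| ≤ 1 := by
    intro ω; unfold indic; split <;> simp
  have hSb : ∀ ω, |S z ω| ≤ 1 := by
    intro ω; rcases hset.hS01 z ω with h | h <;> simp [h]
  -- pointwise rewriting of the integrand
  have hSobs : ∀ ω, Z ω = z → Sobs J Z S ω = S z ω := by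
    intro ω h
    unfold Sobs indic
    rw [Finset.sum_eq_single z]
    · simp [h]
    · intro b _ hbz; simp [h, Ne.symm hbz]
    · intro hz'; exact absurd hz hz'
  have hpt : ∀ ω, indic Z z ω * (Sobs J Z S ω - pt (X ω)) / πt (X ω) + pt (X ω)
      = (1 / πt (X ω)) * (indic Z z ω * S z ω)
        - (pt (X ω) / πt (X ω)) * indic Z z ω + pt (X ω) := by
    intro ω
    by_cases h : Z ω = z
    · rw [hSobs ω h]
      have h1 : indic Z z ω = 1 := by simp [indic, h]
      rw [h1]; ring
    · have h0 : indic Z z ω = 0 := by simp [indic, h]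
      rw [h0]; ring
  rw [integral_congr_ae (Filter.EventuallyEq.of_eq (funext hpt))]
  -- integrability facts
  have hg1m : Measurable (fun ω => indic Z z ω * S z ω) := hindm.mul (hset.hSm z)
  have hg1 : Integrable (fun ω => indic Z z ω * S z ω) P := by
    refine integrable_of_bdd hg1m.aestronglyMeasurable (C := 1) (ae_of_all _ fun ω => ?_)
    rw [abs_mul]
    calc |indic Z z ω| * |S z ω| ≤ 1 * 1 :=
      mul_le_mul (hindb ω) (hSb ω) (abs_nonneg _) zero_le_one
    _ = 1 := by ring
  have hind : Integrable (indic Z z) P :=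
    integrable_of_bdd hindm.aestronglyMeasurable (ae_of_all _ hindb)
  -- bounds for the working functions
  have hψ1m : Measurable (fun x => 1 / πt x) := measurable_const.div hπtm
  have hψ1b : ∀ x, |1 / πt x| ≤ 1 / cw := by
    intro x
    rw [abs_of_pos (one_div_pos.mpr (hπpos x))]
    exact one_div_le_one_div_of_le hcw.1 (hπtb x).1
  have hψ2m : Measurable (fun x => pt x / πt x) := hptm.div hπtm
  have hψ2b : ∀ x, |pt x / πt x| ≤ 1 / cw := by
    intro x
    rw [abs_div, abs_of_pos (hπpos x), abs_of_pos (lt_of_lt_of_le hcw.1 (hptb x).1)]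
    apply div_le_div₀ (by positivity) _ hcw.1 (hπtb x).1
    linarith [(hptb x).2, hcw.1]
  have hptb1 : ∀ x, |pt x| ≤ 1 := by
    intro x
    rw [abs_of_pos (lt_of_lt_of_le hcw.1 (hptb x).1)]
    linarith [(hptb x).2, hcw.1]
  -- the conditional expectations are a.e. in [0,1]
  have hπx0 : 0 ≤ᵐ[P] πx := condExp_nonneg (ae_of_all _ fun ω => by
    unfold indic; split <;> norm_num)
  have hπx1 : πx ≤ᵐ[P] fun _ => (1:ℝ) := by
    have := condExp_mono (μ := P) (m := mX X) hind (integrable_const 1)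
      (ae_of_all _ fun ω => by unfold indic; split <;> norm_num)
    rwa [condExp_const hm] at this
  have hSint : Integrable (S z) P :=
    integrable_of_bdd (hset.hSm z).aestronglyMeasurable (ae_of_all _ hSb)
  have hpz0 : 0 ≤ᵐ[P] pz := condExp_nonneg (ae_of_all _ fun ω => by
    rcases hset.hS01 z ω with h | h <;> simp [h])
  have hpz1 : pz ≤ᵐ[P] fun _ => (1:ℝ) := by
    have := condExp_mono (μ := P) (m := mX X) hSint (integrable_const 1)
      (ae_of_all _ fun ω => by rcases hset.hS01 z ω with h | h <;> simp [h])
    rwa [condExp_const hm] at this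
  have hπxm : AEStronglyMeasurable πx P :=
    (stronglyMeasurable_condExp.mono hm).aestronglyMeasurable
  have hpzm : AEStronglyMeasurable pz P :=
    (stronglyMeasurable_condExp.mono hm).aestronglyMeasurable
  -- Treatment ignorability applied to φ(s,y) = clamp of s z
  have hkey : P[fun ω => indic Z z ω * S z ω | mX X]
      =ᵐ[P] fun ω => πx ω * pz ω := by
    have hφm : Measurable (Function.uncurry fun (s y : ℕ → ℝ) => max 0 (min (s z) 1)) := by
      unfold Function.uncurry
      exact measurable_const.max
        (((measurable_pi_apply z).comp measurable_fst).min measurable_const)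
    have hφb : ∃ C, ∀ s y : ℕ → ℝ, |max 0 (min (s z) 1)| ≤ C := by
      refine ⟨1, fun s y => ?_⟩
      rw [abs_of_nonneg (le_max_left _ _)]
      exact max_le zero_le_one (min_le_right _ _)
    have h := hTI.2 z hz (fun s _ => max 0 (min (s z) 1)) hφm hφb
    have h1 : (fun ω => indic Z z ω *
        (fun (s : ℕ → ℝ) (_ : ℕ → ℝ) => max 0 (min (s z) 1)) (fun w => S w ω) (fun w => Y w ω))
        = fun ω => indic Z z ω * S z ω := by
      funext ω; rcases hset.hS01 z ω with hh | hh <;> simp [hh]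
    have h2 : (fun ω' =>
        (fun (s : ℕ → ℝ) (_ : ℕ → ℝ) => max 0 (min (s z) 1)) (fun w => S w ω') (fun w => Y w ω'))
        = S z := by
      funext ω; rcases hset.hS01 z ω with hh | hh <;> simp [hh]
    rw [h1, h2] at h
    exact h
  -- compute the three integrals
  have hA : ∫ ω, (1 / πt (X ω)) * (indic Z z ω * S z ω) ∂P
      = ∫ ω, (1 / πt (X ω)) * (πx ω * pz ω) ∂P := by
    rw [pull_out P X hset.hX _ hψ1m (1 / cw) hψ1b _ hg1]
    exact integral_congr_ae (hkey.mono fun ω h => by dsimp only at h ⊢; rw [h])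
  have hB : ∫ ω, (pt (X ω) / πt (X ω)) * indic Z z ω ∂P
      = ∫ ω, (pt (X ω) / πt (X ω)) * πx ω ∂P :=
    pull_out P X hset.hX _ hψ2m (1 / cw) hψ2b _ hind
  -- integrability of the conditional-expectation expressions
  have hXm : Measurable X := hset.hX
  have hIA : Integrable (fun ω => (1 / πt (X ω)) * (πx ω * pz ω)) P := by
    refine integrable_of_bdd (((hψ1m.comp hXm).aestronglyMeasurable).mul
      (hπxm.mul hpzm)) (C := 1 / cw) ?_
    filter_upwards [hπx0, hπx1, hpz0, hpz1] with ω h0 h1 h2 h3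
    rw [abs_mul, abs_mul]
    calc |1 / πt (X ω)| * (|πx ω| * |pz ω|) ≤ (1 / cw) * (1 * 1) := by
          apply mul_le_mul (hψ1b _) _ (by positivity) (one_div_pos.mpr hcw.1).le
          exact mul_le_mul (by rw [abs_of_nonneg h0]; exact h1)
            (by rw [abs_of_nonneg h2]; exact h3) (abs_nonneg _) zero_le_one
    _ = 1 / cw := by ring
  have hIB : Integrable (fun ω => (pt (X ω) / πt (X ω)) * πx ω) P := by
    refine integrable_of_bdd (((hψ2m.comp hXm).aestronglyMeasurable).mul hπxm)
      (C := 1 / cw) ?_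
    filter_upwards [hπx0, hπx1] with ω h0 h1
    rw [abs_mul]
    calc |pt (X ω) / πt (X ω)| * |πx ω| ≤ (1 / cw) * 1 :=
          mul_le_mul (hψ2b _) (by rw [abs_of_nonneg h0]; exact h1) (abs_nonneg _)
            (one_div_pos.mpr hcw.1).le
    _ = 1 / cw := by ring
  have hIC : Integrable (fun ω => pt (X ω)) P :=
    integrable_of_bdd (hptm.comp hXm).aestronglyMeasurable
      (ae_of_all _ fun ω => hptb1 (X ω))
  have hIAB : Integrable (fun ω => (1 / πt (X ω)) * (indic Z z ω * S z ω)) P :=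
    hg1.bdd_mul ((hψ1m.comp hXm)).aestronglyMeasurable (c := 1 / cw) (ae_of_all _ fun ω => by
      rw [Real.norm_eq_abs]; exact hψ1b (X ω))
  have hIBB : Integrable (fun ω => (pt (X ω) / πt (X ω)) * indic Z z ω) P :=
    hind.bdd_mul ((hψ2m.comp hXm)).aestronglyMeasurable (c := 1 / cw) (ae_of_all _ fun ω => by
      rw [Real.norm_eq_abs]; exact hψ2b (X ω))
  -- split the integral, substitute, and recombine
  have hIsub : Integrable (fun ω => (1 / πt (X ω)) * (indic Z z ω * S z ω)
      - (pt (X ω) / πt (X ω)) * indic Z z ω) P := hIAB.sub hIBB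
  have hIsub' : Integrable (fun ω => (1 / πt (X ω)) * (πx ω * pz ω)
      - (pt (X ω) / πt (X ω)) * πx ω) P := hIA.sub hIB
  rw [integral_add hIsub hIC, integral_sub hIAB hIBB, hA, hB]
  have hsplit : ∫ ω, ((1 / πt (X ω)) * (πx ω * pz ω)
      - (pt (X ω) / πt (X ω)) * πx ω + pt (X ω)) ∂P
      = ∫ ω, (1 / πt (X ω)) * (πx ω * pz ω) ∂P
        - ∫ ω, (pt (X ω) / πt (X ω)) * πx ω ∂P + ∫ ω, pt (X ω) ∂P := by
    rw [integral_add hIsub' hIC, integral_sub hIA hIB]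
  rw [← hsplit]
  -- a.e. identification with pz
  have hmain : ∫ ω, ((1 / πt (X ω)) * (πx ω * pz ω)
      - (pt (X ω) / πt (X ω)) * πx ω + pt (X ω)) ∂P = ∫ ω, pz ω ∂P := by
    apply integral_congr_ae
    rcases hdr with hπeq | hpeq
    · filter_upwards [hπeq] with ω h
      rw [← h]
      have hne := hπne (X ω)
      field_simp
      ring
    · have hps : pscore P X S J z = P[S z | mX X] := by
        unfold pscore
        rw [if_neg (by omega), if_neg (by omega)]
      rw [hps] at hpeq
      filter_upwards [hpeq] with ω h
      rw [h, ← hpz]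
      ring
  rw [hmain]
  -- finally ∫ pz = ∫ S z = P(S z = 1)
  rw [hpz, integral_condExp hm]
  have hSeq : S z = Set.indicator {ω | S z ω = 1} (fun _ => (1:ℝ)) := by
    funext ω
    rcases hset.hS01 z ω with h | h <;>
      simp [Set.indicator_apply, Set.mem_setOf_eq, h]
  rw [hSeq, integral_indicator_const (1:ℝ)
    (show MeasurableSet {ω | S z ω = 1} from hset.hSm z (measurableSet_singleton 1))]
  simp
  rfl

end TruncationByDeath
end
end
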